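/- In any optimal cover of a perimeter P that is a proper subset of the circle ∂R, some covering arc has its right endpoint coinciding with the right endpoint of some segment of P, and some covering arc has its left endpoint coinciding with the left endpoint of some segment of P. -/

import Mathlib

/-- A closed arc on the circle of circumference `T`. -/
def carc (T : ℝ) (a b : ℝ) : Set (AddCircle T) :=
  (fun x : ℝ => (x : AddCircle T)) '' Set.Icc a b

/-- An open arc on the circle of circumference `T`. -/
def oarc (T : ℝ) (a b : ℝ) : Set (AddCircle T) :=
  (fun x : ℝ => (x : AddCircle T)) '' Set.Ioo a b

open Set MeasureTheory

namespace EPA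

lemma coe_eq_iff (T x y : ℝ) : ((x : AddCircle T) = (y : ℝ)) ↔ ∃ m : ℤ, y = x + m * T := by
  rw [show ((x : AddCircle T) = (y:ℝ)) ↔ _ from QuotientAddGroup.eq_iff_sub_mem]
  constructor
  · intro h
    obtain ⟨m, hm⟩ := AddSubgroup.mem_zmultiples_iff.mp h
    refine ⟨-m, ?_⟩
    rw [zsmul_eq_mul] at hm
    push_cast
    linarith
  · rintro ⟨m, rfl⟩
    exact AddSubgroup.mem_zmultiples_iff.mpr ⟨-m, by rw [zsmul_eq_mul]; push_cast; ring⟩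

lemma coe_add_shift (T x ε : ℝ) (y : ℝ) (h : (x : AddCircle T) = (y : ℝ)) :
    ((x + ε : ℝ) : AddCircle T) = ((y + ε : ℝ) : AddCircle T) := by
  have := congrArg (fun z : AddCircle T => z + (ε : ℝ)) h
  simpa [← QuotientAddGroup.mk_add] using this

lemma mem_carc {T a b : ℝ} {z : AddCircle T} :
    z ∈ carc T a b ↔ ∃ x : ℝ, (a ≤ x ∧ x ≤ b) ∧ (x : AddCircle T) = z := by
  simp [carc, Set.mem_image, Set.mem_Icc, and_assoc]

lemma mem_oarc {T a b : ℝ} {z : AddCircle T} :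
    z ∈ oarc T a b ↔ ∃ x : ℝ, (a < x ∧ x < b) ∧ (x : AddCircle T) = z := by
  simp [oarc, Set.mem_image, Set.mem_Ioo, and_assoc]

lemma carc_mono {T a b a' b' : ℝ} (h1 : a' ≤ a) (h2 : b ≤ b') :
    carc T a b ⊆ carc T a' b' :=
  Set.image_mono (Set.Icc_subset_Icc h1 h2)

lemma carc_shift (T a b : ℝ) : carc T a b ⊆ carc T (a - T) (b - T) := by
  rintro z ⟨x, hx, rfl⟩
  rw [Set.mem_Icc] at hx
  refine ⟨x - T, Set.mem_Icc.2 ⟨by linarith [hx.1], by linarith [hx.2]⟩, ?_⟩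
  rw [coe_eq_iff]
  exact ⟨1, by ring⟩

/-- splitting an interval of length n*s into n pieces -/
lemma carc_split (T W s : ℝ) (n : ℕ) (hn : 0 < n) (hs : 0 ≤ s) :
    carc T W (W + n * s) ⊆ ⋃ j : Fin n, carc T (W + j * s) (W + j * s + s) := by
  rintro z ⟨x, hx, rfl⟩
  rw [Set.mem_Icc] at hx
  rcases eq_or_lt_of_le hs with hs0 | hs0
  · refine Set.mem_iUnion.2 ⟨⟨0, hn⟩, ⟨x, ?_, rfl⟩⟩
    have hxW : x = W := by rw [← hs0] at hx; simp at hx; linarith [hx.1, hx.2]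
    subst hxW
    rw [Set.mem_Icc]
    constructor <;> simp <;> linarith
  · set i : ℕ := min (n - 1) (Nat.floor ((x - W) / s)) with hi
    have hin : i < n := by omega
    refine Set.mem_iUnion.2 ⟨⟨i, hin⟩, ⟨x, ?_, rfl⟩⟩
    rw [Set.mem_Icc]
    constructor
    · have h1 : (i : ℝ) ≤ (x - W) / s := by
        have h2 : (i : ℝ) ≤ (Nat.floor ((x - W) / s) : ℝ) := by
          exact_mod_cast Nat.cast_le.mpr (min_le_right _ _)
        exact h2.trans (Nat.floor_le (div_nonneg (by linarith [hx.1]) hs0.le))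
      have := (le_div_iff₀ hs0).mp h1
      simp only [Fin.val_mk]
      linarith
    · rcases le_or_gt (Nat.floor ((x - W) / s)) (n-1) with hc | hc
      · have hieq : i = Nat.floor ((x - W) / s) := by omega
        have h2 : (x - W) / s < (i : ℝ) + 1 := by
          rw [hieq]
          exact Nat.lt_floor_add_one _
        have := (div_lt_iff₀ hs0).mp h2
        simp only [Fin.val_mk]
        nlinarith
      · have hieq : i = n - 1 := by omega
        have hir : (i : ℝ) = (n : ℝ) - 1 := by
          rw [hieq]
          push_cast [Nat.cast_sub hn]
          ring
        simp only [Fin.val_mk]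
        rw [hir]
        nlinarith [hx.2]

end EPA

namespace EPA

lemma vol_carc_le (T : ℝ) [hT : Fact (0 < T)] (a c : ℝ) (hc0 : 0 ≤ c) (hcT : c < T) :
    volume (carc T a (a + c)) ≤ ENNReal.ofReal c := by
  have hT0 : 0 < T := hT.out
  have hcpt : IsCompact (carc T a (a + c)) :=
    isCompact_Icc.image continuous_quotient_mk'
  rw [AddCircle.add_projection_respects_measure T a hcpt.measurableSet]
  have hsub : (QuotientAddGroup.mk ⁻¹' (carc T a (a + c)) ∩ Ioc a (a + T))
      ⊆ Ioc a (a + c) ∪ {a + T} := by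
    rintro x ⟨hx1, hx2⟩
    rw [Set.mem_preimage] at hx1
    obtain ⟨y, hy, hyx⟩ := mem_carc.mp hx1
    obtain ⟨m, hm⟩ := (coe_eq_iff T y x).mp hyx
    rw [Set.mem_Ioc] at hx2
    have hm1 : (-1 : ℝ) < m := by
      have : (m : ℝ) * T > -1 * T := by nlinarith [hy.1, hy.2, hx2.1, hx2.2]
      exact lt_of_mul_lt_mul_right (by linarith) hT0.le
    have hm2 : (m : ℝ) ≤ 1 := by
      have : (m : ℝ) * T ≤ 1 * T := by nlinarith [hy.1, hy.2, hx2.1, hx2.2]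
      exact le_of_mul_le_mul_right (by linarith) hT0
    have hm1' : (-1 : ℤ) < m := by exact_mod_cast hm1
    have hm2' : m ≤ (1 : ℤ) := by exact_mod_cast hm2
    interval_cases m
    · left
      rw [Set.mem_Ioc]
      push_cast at hm
      constructor <;> [exact hx2.1; nlinarith [hy.2]]
    · right
      push_cast at hm
      have : x = a + T := by nlinarith [hy.1, hx2.2]
      simp [this]
  calc volume _ ≤ volume (Ioc a (a + c) ∪ {a + T}) := measure_mono hsub
    _ ≤ volume (Ioc a (a + c)) + volume ({a + T} : Set ℝ) := measure_union_le _ _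
    _ = ENNReal.ofReal c := by
        rw [Real.volume_Ioc, Real.volume_singleton, add_zero]
        congr 1
        ring

end EPA

namespace EPA

lemma coe_toIcoMod (T : ℝ) (hT : 0 < T) (a x : ℝ) :
    ((toIcoMod hT a x : ℝ) : AddCircle T) = (x : ℝ) := by
  rw [coe_eq_iff]
  refine ⟨toIcoDiv hT a x, ?_⟩
  have := self_sub_toIcoMod hT a x
  rw [zsmul_eq_mul] at this
  linarith

end EPA

/-- Proposition 3: let `P = S₁ ∪ ... ∪ S_q ⊊ ∂R` be a perimeter on a
circle of circumference `T` with segments `S_k = [u k, v k]` and gaps following them.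
In any optimal, gap-normalized cover `{C_j}` (each arc `C_j = [a j, a j + c j]` has
length at most `ℓ* = sInf {feasible ℓ}`, covers `P`, and each gap is either contained
in or disjoint from each `C_j`), some arc's right endpoint coincides with the right
endpoint of some segment, and some arc's left endpoint coincides with the left
endpoint of some segment. -/
theorem endpoint_alignment (T : ℝ) (q n : ℕ) (hq : 0 < q) (hn : 0 < n)
    (u v : Fin q → ℝ)
    (huv : ∀ k, u k ≤ v k)
    (hsep : ∀ k : Fin q, ∀ h : k.1 + 1 < q, v k ≤ u ⟨k.1 + 1, h⟩)
    (h0 : 0 ≤ u ⟨0, hq⟩)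
    (hT : v ⟨q - 1, Nat.sub_lt hq one_pos⟩ ≤ T)
    (hproper : (⋃ k, carc T (u k) (v k)) ≠ Set.univ)
    (a c : Fin n → ℝ)
    (hopt : ∀ j, 0 ≤ c j ∧ c j ≤ sInf {ℓ : ℝ | ∃ a' c' : Fin n → ℝ,
        (∀ j', 0 ≤ c' j' ∧ c' j' ≤ ℓ) ∧
        (⋃ k, carc T (u k) (v k)) ⊆ ⋃ j', carc T (a' j') (a' j' + c' j')})
    (hcov : (⋃ k, carc T (u k) (v k)) ⊆ ⋃ j, carc T (a j) (a j + c j))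
    (hnorm : ∀ k : Fin q, ∀ j,
        oarc T (v k) (if h : k.1 + 1 < q then u ⟨k.1 + 1, h⟩ else u ⟨0, hq⟩ + T)
          ⊆ carc T (a j) (a j + c j) ∨
        Disjoint
          (oarc T (v k) (if h : k.1 + 1 < q then u ⟨k.1 + 1, h⟩ else u ⟨0, hq⟩ + T))
          (carc T (a j) (a j + c j))) :
    (∃ j k, ((a j + c j : ℝ) : AddCircle T) = ((v k : ℝ) : AddCircle T)) ∧
    (∃ j k, ((a j : ℝ) : AddCircle T) = ((u k : ℝ) : AddCircle T)) := by
  classical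
  open Set MeasureTheory EPA in
  have hqm : q - 1 < q := Nat.sub_lt hq one_pos
  set i0 : Fin q := ⟨0, hq⟩ with hi0
  set qm : Fin q := ⟨q - 1, hqm⟩ with hqmdef
  have hT' : v qm ≤ T := hT
  -- chain lemmas
  have key : ∀ (m : ℕ) (hm : m < q) (i : Fin q), i.1 < m → v i ≤ u ⟨m, hm⟩ := by
    intro m
    induction m with
    | zero => intro _ i h; omega
    | succ p ih =>
      intro hm i h
      have hpq : p < q := Nat.lt_of_succ_lt hm
      rcases Nat.lt_succ_iff_lt_or_eq.mp h with h' | h'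
      · exact le_trans (le_trans (ih hpq i h') (huv ⟨p, hpq⟩)) (hsep ⟨p, hpq⟩ hm)
      · have hieq : i = ⟨p, hpq⟩ := Fin.ext h'
        rw [hieq]; exact hsep ⟨p, hpq⟩ hm
  have hvu : ∀ i j : Fin q, i.1 < j.1 → v i ≤ u j := by
    intro i j h
    have := key j.1 j.2 i h
    simpa using this
  have huu : ∀ i j : Fin q, i.1 ≤ j.1 → u i ≤ u j := by
    intro i j h
    rcases eq_or_lt_of_le h with h' | h'
    · rw [Fin.ext h']
    · exact (huv i).trans (hvu i j h')
  have hvv : ∀ i j : Fin q, i.1 ≤ j.1 → v i ≤ v j := by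
    intro i j h
    rcases eq_or_lt_of_le h with h' | h'
    · rw [Fin.ext h']
    · exact ((hvu i j h').trans (huv j))
  have hu0 : ∀ k, 0 ≤ u k := fun k => h0.trans (huu i0 k (Nat.zero_le _))
  have hv0 : ∀ k, 0 ≤ v k := fun k => (hu0 k).trans (huv k)
  have hvT : ∀ k, v k ≤ T := fun k => (hvv k qm (Nat.le_pred_of_lt k.2)).trans hT'
  have huT : ∀ k, u k ≤ T := fun k => (huv k).trans (hvT k)
  have hT0 : (0 : ℝ) ≤ T := le_trans (hu0 i0) (huT i0)
  set P : Set (AddCircle T) := ⋃ k, carc T (u k) (v k) with hPdef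
  set S : Set ℝ := {ℓ : ℝ | ∃ a' c' : Fin n → ℝ,
        (∀ j', 0 ≤ c' j' ∧ c' j' ≤ ℓ) ∧
        P ⊆ ⋃ j', carc T (a' j') (a' j' + c' j')} with hSdef
  have hopt' : ∀ j, 0 ≤ c j ∧ c j ≤ sInf S := hopt
  have hSbdd : BddBelow S := by
    refine ⟨0, fun ℓ hℓ => ?_⟩
    obtain ⟨a', c', h1, _⟩ := hℓ
    exact ((h1 ⟨0, hn⟩).1).trans (h1 ⟨0, hn⟩).2
  rcases eq_or_lt_of_le hT0 with hTeq | hTpos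
  · -- degenerate case T = 0
    have hueq : ∀ k, u k = 0 := fun k => le_antisymm (by rw [← hTeq] at hT'; linarith [huT k]) (hu0 k)
    have hveq : ∀ k, v k = 0 := fun k => le_antisymm (by rw [← hTeq] at hT'; linarith [hvT k]) (hv0 k)
    have h0S : (0 : ℝ) ∈ S := by
      refine ⟨fun _ => 0, fun _ => 0, fun _ => ⟨le_rfl, le_rfl⟩, ?_⟩
      intro z hz
      rw [hPdef] at hz
      obtain ⟨k, hk⟩ := Set.mem_iUnion.mp hz
      refine Set.mem_iUnion.2 ⟨⟨0, hn⟩, ?_⟩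
      rw [hueq, hveq] at hk
      simpa using hk
    have hInf : sInf S = 0 :=
      le_antisymm (csInf_le hSbdd h0S)
        (le_csInf ⟨0, h0S⟩ fun ℓ hℓ => by
          obtain ⟨a', c', h1, _⟩ := hℓ
          exact ((h1 ⟨0, hn⟩).1).trans (h1 ⟨0, hn⟩).2)
    have hc0 : ∀ j, c j = 0 := fun j =>
      le_antisymm (by rw [← hInf]; exact (hopt' j).2) (hopt' j).1
    have hmem : ((v i0 : ℝ) : AddCircle T) ∈ P :=
      Set.mem_iUnion.2 ⟨i0, ⟨v i0, Set.mem_Icc.2 ⟨huv i0, le_rfl⟩, rfl⟩⟩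
    obtain ⟨j, hj⟩ := Set.mem_iUnion.mp (hcov hmem)
    obtain ⟨t, htm, htv0⟩ := hj
    have htv : ((t : ℝ) : AddCircle T) = ((v i0 : ℝ) : AddCircle T) := htv0
    rw [Set.mem_Icc] at htm
    have hta : t = a j := le_antisymm (by linarith [htm.2, hc0 j]) htm.1
    refine ⟨⟨j, i0, ?_⟩, ⟨j, i0, ?_⟩⟩
    · rw [hc0 j, add_zero, ← hta]; exact htv
    · rw [← hta, htv, hueq, hveq]
  · -- main case : 0 < T
    set w : Fin q → ℝ :=
      fun k => if h : k.1 + 1 < q then u ⟨k.1 + 1, h⟩ else u i0 + T with hwdef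
    have hnorm' : ∀ (k : Fin q) (j : Fin n),
        oarc T (v k) (w k) ⊆ carc T (a j) (a j + c j) ∨
        Disjoint (oarc T (v k) (w k)) (carc T (a j) (a j + c j)) := by
      intro k j
      have := hnorm k j
      simpa only [hwdef] using this
    have hw_le : ∀ k, w k ≤ u i0 + T := by
      intro k
      rw [hwdef]
      dsimp only
      split
      · next h => linarith [huT ⟨k.1 + 1, h⟩, hu0 i0]
      · exact le_rfl
    have hw_gapT : ∀ k, w k ≤ v k + T := by
      intro k
      have h1 := hw_le k
      have h2 : u i0 ≤ v k := (huu i0 k (Nat.zero_le _)).trans (huv k)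
      linarith
    -- partition of the circle
    have hpart : ∀ z : AddCircle T,
        (∃ k, z ∈ carc T (u k) (v k)) ∨ ∃ k, z ∈ oarc T (v k) (w k) := by
      intro z
      obtain ⟨x0, rfl⟩ := QuotientAddGroup.mk_surjective z
      set x := toIcoMod hTpos (u i0) x0 with hx
      have hxIco := toIcoMod_mem_Ico hTpos (u i0) x0
      rw [Set.mem_Ico] at hxIco
      have hxeq : (x : AddCircle T) = (x0 : AddCircle T) := coe_toIcoMod T hTpos (u i0) x0
      have hKne : (Finset.univ.filter (fun k : Fin q => u k ≤ x)).Nonempty := by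
        refine ⟨i0, ?_⟩
        simp only [Finset.mem_filter, Finset.mem_univ, true_and]
        exact hxIco.1
      set km := Finset.max' _ hKne with hkm
      have hkm_mem := Finset.max'_mem _ hKne
      have hkmu : u km ≤ x := (Finset.mem_filter.mp hkm_mem).2
      have hgt : ∀ k : Fin q, km < k → x < u k := by
        intro k hk
        by_contra hcon
        push_neg at hcon
        have hmemk : k ∈ Finset.univ.filter (fun k : Fin q => u k ≤ x) := by
          simp only [Finset.mem_filter, Finset.mem_univ, true_and]
          exact hcon
        have := Finset.le_max' _ k hmemk
        exact absurd hk (not_lt.mpr this)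
      rcases le_or_gt x (v km) with hle | hlt
      · exact Or.inl ⟨km, ⟨x, Set.mem_Icc.2 ⟨hkmu, hle⟩, hxeq⟩⟩
      · refine Or.inr ⟨km, ⟨x, Set.mem_Ioo.2 ⟨hlt, ?_⟩, hxeq⟩⟩
        rw [hwdef]
        dsimp only
        split
        · next h => exact hgt ⟨km.1 + 1, h⟩ (by simp [Fin.lt_def])
        · next h => exact hxIco.2
    obtain ⟨z, hz⟩ := Set.ne_univ_iff_exists_notMem _ |>.mp hproper
    have hzgap : ∃ k, z ∈ oarc T (v k) (w k) := by
      rcases hpart z with ⟨k, hk⟩ | hgap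
      · exact absurd (Set.mem_iUnion.2 ⟨k, hk⟩) hz
      · exact hgap
    obtain ⟨kg, hkg⟩ := hzgap
    obtain ⟨xg, hxg, -⟩ := mem_oarc.mp hkg
    have hgap_pos : v kg < w kg := lt_trans hxg.1 hxg.2
    set γ := w kg - v kg with hγdef
    have hγ0 : 0 < γ := by rw [hγdef]; linarith
    have hγT : γ ≤ T := by have := hw_gapT kg; rw [hγdef]; linarith
    set s := (T - γ) / n with hsdef
    have hs0 : 0 ≤ s := div_nonneg (by linarith) (Nat.cast_nonneg n)
    have hns : (n : ℝ) * s = T - γ := by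
      rw [hsdef]
      field_simp
    have hPsub : ∀ k : Fin q, carc T (u k) (v k) ⊆ carc T (w kg) (v kg + T) := by
      intro k
      rcases le_or_gt k.1 kg.1 with hk | hk
      · rintro zz ⟨x, hxm, rfl⟩
        rw [Set.mem_Icc] at hxm
        refine ⟨x + T, Set.mem_Icc.2 ⟨?_, ?_⟩, ?_⟩
        · have h1 := hw_le kg
          have h2 := huu i0 k (Nat.zero_le _)
          linarith [hxm.1]
        · have h3 := hvv k kg hk
          linarith [hxm.2]
        · rw [coe_eq_iff]
          exact ⟨-1, by push_cast; ring⟩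
      · have hlt : kg.1 + 1 < q := Nat.lt_of_le_of_lt (Nat.succ_le_of_lt hk) k.2
        have hwk : w kg = u ⟨kg.1 + 1, hlt⟩ := by rw [hwdef]; exact dif_pos hlt
        apply carc_mono
        · rw [hwk]; exact huu ⟨kg.1 + 1, hlt⟩ k (Nat.succ_le_of_lt hk)
        · linarith [hvT k, hv0 kg]
    have hPA : P ⊆ carc T (w kg) (v kg + T) := by
      rw [hPdef]
      exact Set.iUnion_subset hPsub
    have hsS : s ∈ S := by
      refine ⟨fun j => w kg + j * s, fun _ => s, fun _ => ⟨hs0, le_rfl⟩, ?_⟩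
      intro zz hzz
      have h1 : zz ∈ carc T (w kg) (w kg + n * s) := by
        have heq : w kg + (n : ℝ) * s = v kg + T := by rw [hns, hγdef]; ring
        rw [heq]
        exact hPA hzz
      exact carc_split T (w kg) s n hn hs0 h1
    have hcs : ∀ j, c j ≤ s := fun j => (hopt' j).2.trans (csInf_le hSbdd hsS)
    by_cases hskip : ∃ k : Fin q, v k < w k ∧
        ∀ j, Disjoint (oarc T (v k) (w k)) (carc T (a j) (a j + c j))
    · obtain ⟨k1, hk1, hdis⟩ := hskip
      constructor
      · -- right alignment
        have hvmem : ((v k1 : ℝ) : AddCircle T) ∈ P :=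
          Set.mem_iUnion.2 ⟨k1, ⟨v k1, Set.mem_Icc.2 ⟨huv k1, le_rfl⟩, rfl⟩⟩
        obtain ⟨j, hj⟩ := Set.mem_iUnion.mp (hcov hvmem)
        obtain ⟨t, htm, htv0⟩ := hj
        have htv : ((t : ℝ) : AddCircle T) = ((v k1 : ℝ) : AddCircle T) := htv0
        rw [Set.mem_Icc] at htm
        rcases eq_or_lt_of_le htm.2 with heq | hlt
        · exact ⟨j, k1, by rw [← heq]; exact htv⟩
        · exfalso
          set ε := min (w k1 - v k1) (a j + c j - t) / 2 with hεdef
          have hε0 : 0 < ε := by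
            apply div_pos _ (by norm_num : (0:ℝ) < 2)
            exact lt_min (by linarith) (by linarith)
          have hε1 : ε < w k1 - v k1 := by
            have := min_le_left (w k1 - v k1) (a j + c j - t)
            rw [hεdef]; linarith
          have hε2 : t + ε ≤ a j + c j := by
            have := min_le_right (w k1 - v k1) (a j + c j - t)
            rw [hεdef]; linarith
          have hmemC : ((t + ε : ℝ) : AddCircle T) ∈ carc T (a j) (a j + c j) :=
            ⟨t + ε, Set.mem_Icc.2 ⟨by linarith [htm.1], hε2⟩, rfl⟩
          have hmemG : ((t + ε : ℝ) : AddCircle T) ∈ oarc T (v k1) (w k1) := by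
            rw [coe_add_shift T t ε (v k1) htv]
            exact ⟨v k1 + ε, Set.mem_Ioo.2 ⟨by linarith, by linarith⟩, rfl⟩
          exact Set.disjoint_left.mp (hdis j) hmemG hmemC
      · -- left alignment
        obtain ⟨k', hk'eq⟩ : ∃ k' : Fin q,
            ((w k1 : ℝ) : AddCircle T) = ((u k' : ℝ) : AddCircle T) := by
          by_cases h : k1.1 + 1 < q
          · refine ⟨⟨k1.1 + 1, h⟩, ?_⟩
            rw [hwdef]
            dsimp only
            rw [dif_pos h]
          · refine ⟨i0, ?_⟩
            rw [hwdef]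
            dsimp only
            rw [dif_neg h, coe_eq_iff]
            exact ⟨-1, by push_cast; ring⟩
        have humem : ((w k1 : ℝ) : AddCircle T) ∈ P := by
          rw [hk'eq]
          exact Set.mem_iUnion.2 ⟨k', ⟨u k', Set.mem_Icc.2 ⟨le_rfl, huv k'⟩, rfl⟩⟩
        obtain ⟨j, hj⟩ := Set.mem_iUnion.mp (hcov humem)
        obtain ⟨t, htm, htv0⟩ := hj
        have htv : ((t : ℝ) : AddCircle T) = ((w k1 : ℝ) : AddCircle T) := htv0
        rw [Set.mem_Icc] at htm
        rcases eq_or_lt_of_le htm.1 with heq | hlt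
        · exact ⟨j, k', by rw [heq, htv, hk'eq]⟩
        · exfalso
          set ε := min (w k1 - v k1) (t - a j) / 2 with hεdef
          have hε0 : 0 < ε := by
            apply div_pos _ (by norm_num : (0:ℝ) < 2)
            exact lt_min (by linarith) (by linarith)
          have hε1 : ε < w k1 - v k1 := by
            have := min_le_left (w k1 - v k1) (t - a j)
            rw [hεdef]; linarith
          have hε2 : a j ≤ t - ε := by
            have := min_le_right (w k1 - v k1) (t - a j)
            rw [hεdef]; linarith
          have hmemC : ((t - ε : ℝ) : AddCircle T) ∈ carc T (a j) (a j + c j) :=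
            ⟨t - ε, Set.mem_Icc.2 ⟨hε2, by linarith [htm.2]⟩, rfl⟩
          have hmemG : ((t - ε : ℝ) : AddCircle T) ∈ oarc T (v k1) (w k1) := by
            have h2 := coe_add_shift T t (-ε) (w k1) htv
            rw [show t - ε = t + -ε by ring, h2]
            exact ⟨w k1 + -ε, Set.mem_Ioo.2 ⟨by linarith, by linarith⟩, rfl⟩
          exact Set.disjoint_left.mp (hdis j) hmemG hmemC
    · -- all nonempty gaps covered: contradiction with optimality
      exfalso
      push_neg at hskip
      have hcovuniv : ∀ zz : AddCircle T, zz ∈ ⋃ j, carc T (a j) (a j + c j) := by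
        intro zz
        rcases hpart zz with ⟨k, hk⟩ | ⟨k, hk⟩
        · exact hcov (Set.mem_iUnion.2 ⟨k, hk⟩)
        · obtain ⟨x', hx', -⟩ := mem_oarc.mp hk
          have hvw : v k < w k := lt_trans hx'.1 hx'.2
          obtain ⟨j, hj⟩ := hskip k hvw
          rcases hnorm' k j with hsub | hdisj
          · exact Set.mem_iUnion.2 ⟨j, hsub hk⟩
          · exact absurd hdisj hj
      haveI : Fact (0 < T) := ⟨hTpos⟩
      have hsT : s < T :=
        lt_of_le_of_lt (div_le_self (by linarith) (by exact_mod_cast hn)) (by linarith)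
      have hvol : ENNReal.ofReal T ≤ ∑ j : Fin n, ENNReal.ofReal (c j) := by
        calc ENNReal.ofReal T = volume (Set.univ : Set (AddCircle T)) :=
              (AddCircle.measure_univ T).symm
          _ ≤ volume (⋃ j, carc T (a j) (a j + c j)) :=
              measure_mono (fun zz _ => hcovuniv zz)
          _ ≤ ∑ j : Fin n, volume (carc T (a j) (a j + c j)) :=
              measure_iUnion_fintype_le _ _
          _ ≤ ∑ j : Fin n, ENNReal.ofReal (c j) :=
              Finset.sum_le_sum fun j _ =>
                vol_carc_le T (a j) (c j) (hopt' j).1 (lt_of_le_of_lt (hcs j) hsT)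
      have hvol2 : (∑ j : Fin n, ENNReal.ofReal (c j)) ≤ ENNReal.ofReal ((n : ℝ) * s) := by
        calc (∑ j : Fin n, ENNReal.ofReal (c j))
            ≤ ∑ _j : Fin n, ENNReal.ofReal s :=
              Finset.sum_le_sum fun j _ => ENNReal.ofReal_le_ofReal (hcs j)
          _ = n * ENNReal.ofReal s := by
              rw [Finset.sum_const, Finset.card_univ, Fintype.card_fin, nsmul_eq_mul]
          _ = ENNReal.ofReal ((n : ℝ) * s) := by
              rw [ENNReal.ofReal_mul (Nat.cast_nonneg n), ENNReal.ofReal_natCast]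
      have hfin : T ≤ (n : ℝ) * s := by
        rw [← ENNReal.ofReal_le_ofReal_iff (by nlinarith : (0:ℝ) ≤ (n:ℝ) * s)]
        exact hvol.trans hvol2
      rw [hns] at hfin
      linarith
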